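/- Let y ∈ C([0,1]) with y'' ∈ L²(0,1) and y'(0) = y'(1) = 0. Let I_h y be the modified piecewise linear interpolant (equal to y at interior nodes, constant on the first and last subintervals). Then ‖y - I_h y‖_{L²(0,1)} ≤ (1/2) h² ‖y''‖_{L²(0,1)}. -/

import Mathlib

open MeasureTheory intervalIntegral

/-- Cauchy–Schwarz for interval integrals with weight 1. -/
lemma cs_interval (f : ℝ → ℝ) (c d : ℝ) (hcd : c ≤ d)
    (hf : IntervalIntegrable f volume c d)
    (hf2 : IntervalIntegrable (fun t => f t ^ 2) volume c d) :
    (∫ t in c..d, f t) ^ 2 ≤ (d - c) * ∫ t in c..d, f t ^ 2 := by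
  set L := d - c with hL
  have hL0 : 0 ≤ L := by linarith
  set S := ∫ t in c..d, f t with hS
  have key : 0 ≤ ∫ t in c..d, (L * f t - S) ^ 2 := by
    apply intervalIntegral.integral_nonneg hcd
    intro t _; positivity
  have expand : (∫ t in c..d, (L * f t - S) ^ 2)
      = L ^ 2 * (∫ t in c..d, f t ^ 2) - 2 * L * S * S + S ^ 2 * L := by
    have h1 : ∀ t, (L * f t - S) ^ 2 = L ^ 2 * f t ^ 2 - (2 * L * S) * f t + S ^ 2 := by
      intro t; ring
    simp_rw [h1]
    rw [intervalIntegral.integral_add, intervalIntegral.integral_sub,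
      intervalIntegral.integral_const_mul, intervalIntegral.integral_const_mul,
      intervalIntegral.integral_const]
    · simp [smul_eq_mul]; ring
    · exact hf2.const_mul _
    · exact hf.const_mul _
    · exact (hf2.const_mul _).sub (hf.const_mul _)
    · exact intervalIntegrable_const
  rw [expand] at key
  rcases eq_or_lt_of_le hcd with rfl | hlt
  · simp [hS, hL]
  · have hLpos : 0 < L := by simp [hL]; linarith
    nlinarith [key, hLpos]

/-- ∫_a^b |s - ζ| ds for ζ ∈ [a,b]. -/
lemma abs_int (a b ζ : ℝ) (hab : a ≤ b) (hζ : ζ ∈ Set.Icc a b) :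
    ∫ s in a..b, |s - ζ| = ((ζ - a) ^ 2 + (b - ζ) ^ 2) / 2 := by
  obtain ⟨h1, h2⟩ := hζ
  have i1 : IntervalIntegrable (fun s => |s - ζ|) volume a ζ :=
    ((continuous_id.sub continuous_const).abs).intervalIntegrable _ _
  have i2 : IntervalIntegrable (fun s => |s - ζ|) volume ζ b :=
    ((continuous_id.sub continuous_const).abs).intervalIntegrable _ _
  rw [← intervalIntegral.integral_add_adjacent_intervals i1 i2]
  have e1 : ∫ s in a..ζ, |s - ζ| = ∫ s in a..ζ, (ζ - s) := by
    apply intervalIntegral.integral_congr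
    intro s hs
    rw [Set.uIcc_of_le h1] at hs
    dsimp only
    rw [abs_of_nonpos (by linarith [hs.2])]; ring
  have e2 : ∫ s in ζ..b, |s - ζ| = ∫ s in ζ..b, (s - ζ) := by
    apply intervalIntegral.integral_congr
    intro s hs
    rw [Set.uIcc_of_le h2] at hs
    dsimp only
    rw [abs_of_nonneg (by linarith [hs.1])]
  rw [e1, e2]
  rw [intervalIntegral.integral_sub intervalIntegrable_const
      (intervalIntegral.intervalIntegrable_id),
    intervalIntegral.integral_sub (intervalIntegral.intervalIntegrable_id)
      intervalIntegrable_const,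
    integral_id, integral_id, intervalIntegral.integral_const,
    intervalIntegral.integral_const]
  simp [smul_eq_mul]; ring

lemma key_interval (a b : ℝ) (hab : a < b)
    (y y' y'' : ℝ → ℝ)
    (hy : ∀ t, HasDerivAt y (y' t) t) (hy' : ∀ t, HasDerivAt y' (y'' t) t)
    (h2 : IntervalIntegrable (fun t => y'' t ^ 2) volume a b)
    (h1 : IntervalIntegrable y'' volume a b)
    (α β ξ c : ℝ) (hξ : ξ ∈ Set.Icc a b) (hyξ : y' ξ = β)
    (hc : c = a ∨ c = b) (hec : y c = α + β * c) :
    ∫ t in a..b, (y t - (α + β * t)) ^ 2 ≤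
      (b - a) ^ 2 / 2 * ((b - a) ^ 2 / 2 * ∫ t in a..b, y'' t ^ 2) := by
  have hab' : a ≤ b := hab.le
  have hconty : Continuous y := by
    rw [continuous_iff_continuousAt]; exact fun t => (hy t).continuousAt
  have hconty' : Continuous y' := by
    rw [continuous_iff_continuousAt]; exact fun t => (hy' t).continuousAt
  set M := ∫ t in a..b, y'' t ^ 2 with hM
  have hM0 : 0 ≤ M := intervalIntegral.integral_nonneg hab' (fun t _ => sq_nonneg _)
  have huIcc : Set.uIcc a b = Set.Icc a b := Set.uIcc_of_le hab'
  have subint : ∀ u v, u ∈ Set.Icc a b → v ∈ Set.Icc a b →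
      IntervalIntegrable y'' volume u v := by
    intro u v hu hv
    exact h1.mono_set (Set.uIcc_subset_uIcc (huIcc ▸ hu) (huIcc ▸ hv))
  have subint2 : ∀ u v, u ∈ Set.Icc a b → v ∈ Set.Icc a b →
      IntervalIntegrable (fun t => y'' t ^ 2) volume u v := by
    intro u v hu hv
    exact h2.mono_set (Set.uIcc_subset_uIcc (huIcc ▸ hu) (huIcc ▸ hv))
  have M_mono : ∀ u v, u ∈ Set.Icc a b → v ∈ Set.Icc a b → u ≤ v →
      ∫ t in u..v, y'' t ^ 2 ≤ M := by
    intro u v hu hv huv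
    exact intervalIntegral.integral_mono_interval hu.1 huv hv.2
      (Filter.Eventually.of_forall (fun t => sq_nonneg _)) h2
  have step1 : ∀ s ∈ Set.Icc a b, y' s - β = ∫ u in ξ..s, y'' u := by
    intro s hs
    rw [intervalIntegral.integral_eq_sub_of_hasDerivAt (fun u _ => hy' u)
      (subint ξ s hξ hs), hyξ]
  have step2 : ∀ s ∈ Set.Icc a b, (y' s - β) ^ 2 ≤ |s - ξ| * M := by
    intro s hs
    rw [step1 s hs]
    rcases le_total ξ s with hξs | hsξ
    · have cs := cs_interval y'' ξ s hξs (subint ξ s hξ hs) (subint2 ξ s hξ hs)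
      have hm := M_mono ξ s hξ hs hξs
      have h0 : 0 ≤ ∫ u in ξ..s, y'' u ^ 2 :=
        intervalIntegral.integral_nonneg hξs (fun t _ => sq_nonneg _)
      have : |s - ξ| = s - ξ := abs_of_nonneg (by linarith)
      rw [this]
      calc (∫ u in ξ..s, y'' u) ^ 2 ≤ (s - ξ) * ∫ u in ξ..s, y'' u ^ 2 := cs
        _ ≤ (s - ξ) * M := by
            apply mul_le_mul_of_nonneg_left hm (by linarith)
    · have cs := cs_interval y'' s ξ hsξ (subint s ξ hs hξ) (subint2 s ξ hs hξ)
      have hm := M_mono s ξ hs hξ hsξ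
      have : |s - ξ| = ξ - s := by rw [abs_sub_comm]; exact abs_of_nonneg (by linarith)
      rw [this, intervalIntegral.integral_symm, neg_sq]
      calc (∫ u in s..ξ, y'' u) ^ 2 ≤ (ξ - s) * ∫ u in s..ξ, y'' u ^ 2 := cs
        _ ≤ (ξ - s) * M := mul_le_mul_of_nonneg_left hm (by linarith)
  set E := ∫ s in a..b, (y' s - β) ^ 2 with hE
  have intE : IntervalIntegrable (fun s => (y' s - β) ^ 2) volume a b :=
    (((hconty'.sub continuous_const).pow 2)).intervalIntegrable _ _
  have intEsub : ∀ u v, u ∈ Set.Icc a b → v ∈ Set.Icc a b →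
      IntervalIntegrable (fun s => (y' s - β) ^ 2) volume u v :=
    fun u v _ _ => (((hconty'.sub continuous_const).pow 2)).intervalIntegrable _ _
  have E0 : 0 ≤ E := intervalIntegral.integral_nonneg hab' (fun t _ => sq_nonneg _)
  have E_mono : ∀ u v, u ∈ Set.Icc a b → v ∈ Set.Icc a b → u ≤ v →
      ∫ s in u..v, (y' s - β) ^ 2 ≤ E := by
    intro u v hu hv huv
    exact intervalIntegral.integral_mono_interval hu.1 huv hv.2
      (Filter.Eventually.of_forall (fun t => sq_nonneg _)) intE
  have stepE : E ≤ (b - a) ^ 2 / 2 * M := by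
    have mono : E ≤ ∫ s in a..b, |s - ξ| * M := by
      apply intervalIntegral.integral_mono_on hab' intE
        (((continuous_id.sub continuous_const).abs.mul continuous_const).intervalIntegrable _ _)
        step2
    have : ∫ s in a..b, |s - ξ| * M = ((ξ - a) ^ 2 + (b - ξ) ^ 2) / 2 * M := by
      rw [intervalIntegral.integral_mul_const, abs_int a b ξ hab' hξ]
    rw [this] at mono
    obtain ⟨hξ1, hξ2⟩ := hξ
    nlinarith [mul_le_mul_of_nonneg_right (show (ξ - a) * (b - ξ) ≥ 0 by nlinarith) hM0]
  -- now bound e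
  have hcm : c ∈ Set.Icc a b := by rcases hc with rfl | rfl <;> simp [hab']
  have hg : ∀ t : ℝ, HasDerivAt (fun t => y t - (α + β * t)) (y' t - β) t := by
    intro t
    exact ((hy t).sub (((hasDerivAt_id t).const_mul β).const_add α)).congr_deriv (by ring)
  have step4 : ∀ t ∈ Set.Icc a b, (y t - (α + β * t)) ^ 2 ≤ |t - c| * E := by
    intro t ht
    have ftc : ∫ s in c..t, (y' s - β) = (y t - (α + β * t)) - (y c - (α + β * c)) :=
      intervalIntegral.integral_eq_sub_of_hasDerivAt (fun s _ => hg s)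
        ((hconty'.sub continuous_const).intervalIntegrable _ _)
    have hc0 : y c - (α + β * c) = 0 := by rw [hec]; ring
    rw [hc0, sub_zero] at ftc
    rw [← ftc]
    rcases le_total c t with hct | htc
    · have cs := cs_interval (fun s => y' s - β) c t hct
        ((hconty'.sub continuous_const).intervalIntegrable _ _)
        (intEsub c t hcm ht)
      have hm := E_mono c t hcm ht hct
      rw [abs_of_nonneg (by linarith)]
      calc (∫ s in c..t, (y' s - β)) ^ 2 ≤ (t - c) * ∫ s in c..t, (y' s - β) ^ 2 := cs
        _ ≤ (t - c) * E := mul_le_mul_of_nonneg_left hm (by linarith)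
    · have cs := cs_interval (fun s => y' s - β) t c htc
        ((hconty'.sub continuous_const).intervalIntegrable _ _)
        (intEsub t c ht hcm)
      have hm := E_mono t c ht hcm htc
      rw [abs_sub_comm, abs_of_nonneg (by linarith),
        intervalIntegral.integral_symm, neg_sq]
      calc (∫ s in t..c, (y' s - β)) ^ 2 ≤ (c - t) * ∫ s in t..c, (y' s - β) ^ 2 := cs
        _ ≤ (c - t) * E := mul_le_mul_of_nonneg_left hm (by linarith)
  have step5 : ∫ t in a..b, (y t - (α + β * t)) ^ 2 ≤ (b - a) ^ 2 / 2 * E := by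
    have mono : ∫ t in a..b, (y t - (α + β * t)) ^ 2 ≤ ∫ t in a..b, |t - c| * E := by
      apply intervalIntegral.integral_mono_on hab'
        (((hconty.sub ((continuous_const.add (continuous_const.mul continuous_id)))).pow 2).intervalIntegrable _ _)
        (((continuous_id.sub continuous_const).abs.mul continuous_const).intervalIntegrable _ _)
        step4
    have : ∫ t in a..b, |t - c| * E = ((c - a) ^ 2 + (b - c) ^ 2) / 2 * E := by
      rw [intervalIntegral.integral_mul_const, abs_int a b c hab' hcm]
    rw [this] at mono
    have : ((c - a) ^ 2 + (b - c) ^ 2) / 2 * E ≤ (b - a) ^ 2 / 2 * E := by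
      rcases hc with rfl | rfl <;> nlinarith [E0]
    linarith
  calc ∫ t in a..b, (y t - (α + β * t)) ^ 2 ≤ (b - a) ^ 2 / 2 * E := step5
    _ ≤ (b - a) ^ 2 / 2 * ((b - a) ^ 2 / 2 * M) := by
        apply mul_le_mul_of_nonneg_left stepE (by positivity)

set_option maxHeartbeats 2000000 in
/-- L² interpolation error estimate for the modified
piecewise linear interpolant: ‖y - I_h y‖_{L²(0,1)} ≤ (1/2) h² ‖y''‖_{L²(0,1)}. -/
theorem stmt_1
    (n : ℕ) (hn : 2 ≤ n) (x : ℕ → ℝ) (hx0 : x 0 = 0) (hxn : x n = 1)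
    (hmono : ∀ i < n, x i < x (i + 1)) (h : ℝ) (hh : 0 < h)
    (hmesh : ∀ i < n, x (i + 1) - x i ≤ h)
    (y y' y'' Iy : ℝ → ℝ)
    (hy : ∀ t, HasDerivAt y (y' t) t)
    (hy' : ∀ t, HasDerivAt y' (y'' t) t)
    (hy''L2 : IntervalIntegrable (fun t => (y'' t) ^ 2) volume 0 1)
    (hb0 : y' 0 = 0) (hb1 : y' 1 = 0)
    (hIcont : ContinuousOn Iy (Set.Icc 0 1))
    (hIval : ∀ i, 1 ≤ i → i ≤ n - 1 → Iy (x i) = y (x i))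
    (hIaff : ∀ i, 1 ≤ i → i + 1 ≤ n - 1 →
      ∃ α β : ℝ, ∀ t ∈ Set.Icc (x i) (x (i + 1)), Iy t = α + β * t)
    (hIfirst : ∀ t ∈ Set.Icc (x 0) (x 1), Iy t = y (x 1))
    (hIlast : ∀ t ∈ Set.Icc (x (n - 1)) (x n), Iy t = y (x (n - 1))) :
    Real.sqrt (∫ t in (0:ℝ)..1, (y t - Iy t) ^ 2) ≤
      (1 / 2) * h ^ 2 * Real.sqrt (∫ t in (0:ℝ)..1, (y'' t) ^ 2) := by
  have hconty : Continuous y := by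
    rw [continuous_iff_continuousAt]; exact fun t => (hy t).continuousAt
  -- monotonicity of the partition
  have hle : ∀ i j, i ≤ j → j ≤ n → x i ≤ x j := by
    intro i j hij hjn
    induction j with
    | zero => simp_all
    | succ k ih =>
      rcases Nat.lt_or_ge i (k+1) with hlt | hge
      · have h1 : x i ≤ x k := ih (by omega) (by omega)
        have h2 : x k < x (k+1) := hmono k (by omega)
        linarith
      · have : i = k + 1 := by omega
        simp [this]
  have hsub : ∀ i, i ≤ n → x i ∈ Set.Icc (0:ℝ) 1 := by
    intro i hi
    constructor
    · rw [← hx0]; exact hle 0 i (Nat.zero_le _) hi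
    · rw [← hxn]; exact hle i n hi le_rfl
  have hssub : ∀ i, i < n → Set.uIcc (x i) (x (i+1)) ⊆ Set.uIcc (0:ℝ) 1 := by
    intro i hi
    apply Set.uIcc_subset_uIcc
    · rw [Set.uIcc_of_le (by norm_num)]; exact hsub i (by omega)
    · rw [Set.uIcc_of_le (by norm_num)]; exact hsub (i+1) (by omega)
  -- integrability of y''
  have hmeas : Measurable y'' := by
    have : y'' = deriv y' := funext fun t => ((hy' t).deriv).symm
    rw [this]; exact measurable_deriv y'
  have hy''int : IntervalIntegrable y'' volume 0 1 := by
    refine IntervalIntegrable.mono_fun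
      ((_root_.intervalIntegrable_const (c := (1:ℝ))).add hy''L2)
      hmeas.aestronglyMeasurable.restrict (Filter.Eventually.of_forall ?_)
    intro t
    simp only [Real.norm_eq_abs, Pi.add_apply]
    have h2 : |(1:ℝ) + y'' t ^ 2| = 1 + y'' t ^ 2 := abs_of_nonneg (by positivity)
    rw [h2]
    nlinarith [sq_nonneg (|y'' t| - 1), abs_nonneg (y'' t), sq_abs (y'' t)]
  -- integrability on subintervals
  have hFint : ∀ i, i < n → IntervalIntegrable (fun t => (y t - Iy t) ^ 2) volume
      (x i) (x (i+1)) := by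
    intro i hi
    apply ContinuousOn.intervalIntegrable
    apply ContinuousOn.pow
    apply ContinuousOn.sub (hconty.continuousOn)
    apply hIcont.mono
    intro t ht
    have := hssub i hi ht
    rwa [Set.uIcc_of_le (by norm_num)] at this
  have hQint : ∀ i, i < n → IntervalIntegrable (fun t => y'' t ^ 2) volume
      (x i) (x (i+1)) := fun i hi => hy''L2.mono_set (hssub i hi)
  have hQint1 : ∀ i, i < n → IntervalIntegrable y'' volume
      (x i) (x (i+1)) := fun i hi => hy''int.mono_set (hssub i hi)
  -- per-interval estimate
  have key_i : ∀ i, i < n → ∫ t in x i..x (i+1), (y t - Iy t) ^ 2 ≤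
      h ^ 4 / 4 * ∫ t in x i..x (i+1), y'' t ^ 2 := by
    intro i hi
    set a := x i with ha
    set b := x (i+1) with hb
    have hab : a < b := hmono i hi
    have hL : b - a ≤ h := hmesh i hi
    have hM0 : (0:ℝ) ≤ ∫ t in a..b, y'' t ^ 2 :=
      intervalIntegral.integral_nonneg hab.le (fun t _ => sq_nonneg _)
    -- produce affine data
    have main : ∃ α β : ℝ, (∀ t ∈ Set.Icc a b, Iy t = α + β * t) ∧
        (∃ ξ ∈ Set.Icc a b, y' ξ = β) ∧ (∃ c, (c = a ∨ c = b) ∧ y c = α + β * c) := by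
      rcases Nat.eq_zero_or_pos i with rfl | hi1
      · -- first interval
        refine ⟨y (x 1), 0, ?_, ⟨a, ?_, ?_⟩, ⟨b, Or.inr rfl, by ring⟩⟩
        · intro t ht; rw [hIfirst t ht]; ring
        · exact Set.left_mem_Icc.2 hab.le
        · rw [ha, hx0]; simpa using hb0
      · rcases Nat.lt_or_ge (i+1) n with hi2 | hi2
        · -- interior interval
          have h1i : 1 ≤ i := hi1
          have h2i : i + 1 ≤ n - 1 := by omega
          obtain ⟨α, β, haff⟩ := hIaff i h1i h2i
          have hea : y a = α + β * a := by
            rw [← hIval i h1i (by omega), haff a (Set.left_mem_Icc.2 hab.le)]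
          have heb : y b = α + β * b := by
            rw [← hIval (i+1) (by omega) h2i, haff b (Set.right_mem_Icc.2 hab.le)]
          have hg : ∀ t : ℝ, HasDerivAt (fun t => y t - (α + β * t)) (y' t - β) t :=
            fun t => ((hy t).sub (((hasDerivAt_id t).const_mul β).const_add α)).congr_deriv (by ring)
          obtain ⟨ξ, hξmem, hξ0⟩ := exists_hasDerivAt_eq_zero hab
            ((hconty.sub (by continuity)).continuousOn)
            (show y a - (α + β * a) = y b - (α + β * b) by rw [hea, heb]; ring)
            (fun t _ => hg t)
          exact ⟨α, β, haff, ⟨ξ, Set.mem_Icc_of_Ioo hξmem, by linarith [sub_eq_zero.1 hξ0]⟩,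
            ⟨a, Or.inl rfl, hea⟩⟩
        · -- last interval
          have hieq : i = n - 1 := by omega
          refine ⟨y (x (n-1)), 0, ?_, ⟨b, ?_, ?_⟩, ⟨a, Or.inl rfl, by rw [ha, hieq]; ring⟩⟩
          · intro t ht
            have hmem : t ∈ Set.Icc (x (n-1)) (x n) := by
              rw [show n - 1 = i from by omega, show n = i + 1 from by omega]; exact ht
            rw [hIlast t hmem]
            rw [show n - 1 = i from by omega]
            ring
          · exact Set.right_mem_Icc.2 hab.le
          · have : i + 1 = n := by omega
            rw [hb, this, hxn]; simpa using hb1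
      
    obtain ⟨α, β, haff, ⟨ξ, hξmem, hξval⟩, ⟨c, hc, hec⟩⟩ := main
    have congr1 : ∫ t in a..b, (y t - Iy t) ^ 2 = ∫ t in a..b, (y t - (α + β * t)) ^ 2 := by
      apply intervalIntegral.integral_congr
      intro t ht
      rw [Set.uIcc_of_le hab.le] at ht
      dsimp only
      rw [haff t ht]
    rw [congr1]
    have := key_interval a b hab y y' y'' hy hy' (hQint i hi) (hQint1 i hi)
      α β ξ c hξmem hξval hc hec
    refine this.trans ?_
    have hba : (0:ℝ) < b - a := by linarith
    generalize (∫ t in a..b, y'' t ^ 2) = M at hM0 ⊢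
    have h4 : (b - a) ^ 4 ≤ h ^ 4 := pow_le_pow_left₀ (by linarith) hL 4
    nlinarith [mul_le_mul_of_nonneg_right h4 hM0]
  -- sum up
  have sumF : ∑ i ∈ Finset.range n, ∫ t in x i..x (i+1), (y t - Iy t) ^ 2
      = ∫ t in (0:ℝ)..1, (y t - Iy t) ^ 2 := by
    rw [intervalIntegral.sum_integral_adjacent_intervals hFint, hx0, hxn]
  have sumQ : ∑ i ∈ Finset.range n, ∫ t in x i..x (i+1), y'' t ^ 2
      = ∫ t in (0:ℝ)..1, y'' t ^ 2 := by
    rw [intervalIntegral.sum_integral_adjacent_intervals hQint, hx0, hxn]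
  have total : ∫ t in (0:ℝ)..1, (y t - Iy t) ^ 2 ≤
      h ^ 4 / 4 * ∫ t in (0:ℝ)..1, y'' t ^ 2 := by
    rw [← sumF, ← sumQ, Finset.mul_sum]
    apply Finset.sum_le_sum
    intro i hi
    exact key_i i (Finset.mem_range.1 hi)
  -- take square roots
  have hQ0 : (0:ℝ) ≤ ∫ t in (0:ℝ)..1, y'' t ^ 2 :=
    intervalIntegral.integral_nonneg (by norm_num) (fun t _ => sq_nonneg _)
  calc Real.sqrt (∫ t in (0:ℝ)..1, (y t - Iy t) ^ 2)
      ≤ Real.sqrt (h ^ 4 / 4 * ∫ t in (0:ℝ)..1, y'' t ^ 2) := Real.sqrt_le_sqrt total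
    _ = (1 / 2) * h ^ 2 * Real.sqrt (∫ t in (0:ℝ)..1, y'' t ^ 2) := by
        rw [Real.sqrt_mul (by positivity)]
        congr 1
        rw [show h ^ 4 / 4 = ((1/2) * h ^ 2) ^ 2 by ring, Real.sqrt_sq (by positivity)]
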